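/- Hoare while rule in KAT: for tests A, b and Kleene element x, if [A∧b]·x·[¬A] = 0 then [A]·(([b]·x)*·[¬b])·[¬(A∧¬b)] = 0. -/

import Mathlib

private lemma sim {X : Type*} [KleeneAlgebra X] {a p : X} (h : a * p ≤ p * a) :
    a * KStar.kstar p ≤ KStar.kstar p * a := by
  apply mul_kstar_le
  · exact le_mul_of_one_le_left' one_le_kstar
  · calc KStar.kstar p * a * p = KStar.kstar p * (a * p) := by rw [mul_assoc]
      _ ≤ KStar.kstar p * (p * a) := mul_le_mul_right h _
      _ = KStar.kstar p * p * a := by rw [mul_assoc]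
      _ ≤ KStar.kstar p * a := mul_le_mul_left kstar_mul_le_kstar _

/-- Hoare while rule in KAT: if [A∧b]·x·[¬A] = 0 then
[A]·(([b]·x)*·[¬b])·[¬(A∧¬b)] = 0. -/
theorem kat_hoare_while {X B : Type*} [KleeneAlgebra X] [BooleanAlgebra B]
    (f : B → X)
    (hmul : ∀ a b : B, f (a ⊓ b) = f a * f b)
    (hadd : ∀ a b : B, f (a ⊔ b) = f a + f b)
    (hone : f ⊤ = 1) (hzero : f ⊥ = 0)
    (A b : B) (x : X)
    (h : f (A ⊓ b) * x * f Aᶜ = 0) :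
    f A * (KStar.kstar (f b * x) * f bᶜ) * f (A ⊓ bᶜ)ᶜ = 0 := by
  have hA1 : f A ≤ 1 := by
    rw [← hone, ← sup_compl_eq_top (x := A), hadd]; exact le_self_add
  -- f A * (f b * x) ≤ (f b * x) * f A
  have hsim : f A * (f b * x) ≤ f b * x * f A := by
    have key : f A * (f b * x) = f A * f b * x * f A := by
      have this1 : f A * f b * x = f A * f b * x * (f A + f Aᶜ) := by
        rw [← hadd, sup_compl_eq_top, hone, mul_one]
      rw [← mul_assoc]
      conv_lhs => rw [this1]
      rw [mul_add, ← hmul, h, add_zero]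
    rw [key]
    calc f A * f b * x * f A ≤ 1 * f b * x * f A := by
          exact mul_le_mul_left (mul_le_mul_left (mul_le_mul_left hA1 _) _) _
      _ = f b * x * f A := by rw [one_mul]
  have hstar := sim hsim
  have hcompl : f (A ⊓ bᶜ)ᶜ = f Aᶜ + f b := by
    rw [compl_inf, compl_compl, hadd]
  rw [hcompl, mul_add]
  have t2 : f A * (KStar.kstar (f b * x) * f bᶜ) * f b = 0 := by
    rw [mul_assoc, mul_assoc, ← hmul, compl_inf_self, hzero, mul_zero, mul_zero]
  rw [t2, add_zero]
  refine le_antisymm ?_ zero_le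
  calc f A * (KStar.kstar (f b * x) * f bᶜ) * f Aᶜ
      = f A * KStar.kstar (f b * x) * (f bᶜ * f Aᶜ) := by
        rw [mul_assoc, mul_assoc, mul_assoc]
    _ ≤ KStar.kstar (f b * x) * f A * (f bᶜ * f Aᶜ) := mul_le_mul_left hstar _
    _ = KStar.kstar (f b * x) * (f A * f bᶜ * f Aᶜ) := by
        rw [mul_assoc, mul_assoc]
    _ = 0 := by
        rw [← hmul, ← hmul]
        have : A ⊓ bᶜ ⊓ Aᶜ = ⊥ := by
          rw [inf_right_comm, inf_compl_self, bot_inf_eq]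
        rw [this, hzero, mul_zero]
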